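/- If X is a Tychonoff space, then the free locally convex space L(X) is topologically isomorphic to ℝ ⊕ L_G(X), the direct sum of the reals and the Graev free locally convex space over X; consequently L(X) is a Mackey space if and only if L_G(X) is a Mackey space. -/

import Mathlib

open Topology

universe u v

/-- `(L, i)` is the free locally convex space over the Tychonoff space `X`: `i : X → L`
is continuous and every continuous map from `X` to a locally convex space `E` extends
uniquely to a continuous linear operator `L → E`. -/
def IsFreeLCS (X : Type v) [TopologicalSpace X] (L : Type u) [AddCommGroup L]
    [Module ℝ L] [TopologicalSpace L] (i : X → L) : Prop :=
  Continuous i ∧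
  ∀ (E : Type u) [AddCommGroup E] [Module ℝ E] [TopologicalSpace E]
    [IsTopologicalAddGroup E] [ContinuousSMul ℝ E] [LocallyConvexSpace ℝ E]
    (f : X → E), Continuous f → ∃! g : L →L[ℝ] E, ∀ x : X, g (i x) = f x

/-- `(L, i)` is the Graev free locally convex space over `X` with distinguished point
`e`: as `IsFreeLCS`, but `i e = 0` and the extension property holds for continuous maps
sending `e` to `0`. -/
def IsGraevFreeLCS (X : Type v) [TopologicalSpace X] (e : X) (L : Type u)
    [AddCommGroup L] [Module ℝ L] [TopologicalSpace L] (i : X → L) : Prop :=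
  Continuous i ∧ i e = 0 ∧
  ∀ (E : Type u) [AddCommGroup E] [Module ℝ E] [TopologicalSpace E]
    [IsTopologicalAddGroup E] [ContinuousSMul ℝ E] [LocallyConvexSpace ℝ E]
    (f : X → E), Continuous f → f e = 0 → ∃! g : L →L[ℝ] E, ∀ x : X, g (i x) = f x

/-- A locally convex space is Mackey if every locally convex vector topology on it with
the same continuous linear functionals is coarser than its topology. -/
def IsMackeySpace (E : Type u) [AddCommGroup E] [Module ℝ E] [τ : TopologicalSpace E] :
    Prop :=
  ∀ t : TopologicalSpace E, @IsTopologicalAddGroup E t _ → @ContinuousSMul ℝ E _ _ t →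
    @LocallyConvexSpace ℝ E _ _ _ _ t →
    (∀ f : E →ₗ[ℝ] ℝ, Continuous[t, inferInstance] f ↔ Continuous[τ, inferInstance] f) →
    τ ≤ t

section AuxMackey

section ContHelpers
variable {α β γ : Type*}

theorem contComp {t1 : TopologicalSpace α} {t2 : TopologicalSpace β}
    {t3 : TopologicalSpace γ} {g : β → γ} {f : α → β}
    (hg : Continuous[t2, t3] g) (hf : Continuous[t1, t2] f) :
    Continuous[t1, t3] (g ∘ f) :=
  Continuous.comp hg hf

theorem contComp' {t1 : TopologicalSpace α} {t2 : TopologicalSpace β}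
    {t3 : TopologicalSpace γ} {g : β → γ} {f : α → β}
    (hg : Continuous[t2, t3] g) (hf : Continuous[t1, t2] f) :
    Continuous[t1, t3] (fun x => g (f x)) :=
  Continuous.comp hg hf

theorem contConst {t1 : TopologicalSpace α} {t2 : TopologicalSpace β} (b : β) :
    Continuous[t1, t2] (fun _ => b) := continuous_const

theorem contPair {t1 : TopologicalSpace α} {t2 : TopologicalSpace β}
    {t3 : TopologicalSpace γ} {f : α → β} {g : α → γ}
    (hf : Continuous[t1, t2] f) (hg : Continuous[t1, t3] g) :
    Continuous[t1, @instTopologicalSpaceProd β γ t2 t3] (fun x => (f x, g x)) :=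
  Continuous.prodMk hf hg

theorem contFst {t1 : TopologicalSpace α} {t2 : TopologicalSpace β} :
    Continuous[@instTopologicalSpaceProd α β t1 t2, t1] (Prod.fst : α × β → α) :=
  continuous_fst

theorem contSnd {t1 : TopologicalSpace α} {t2 : TopologicalSpace β} :
    Continuous[@instTopologicalSpaceProd α β t1 t2, t2] (Prod.snd : α × β → β) :=
  continuous_snd

theorem contAdd2 {t1 : TopologicalSpace α} {t2 : TopologicalSpace β} [AddGroup β]
    (h : @IsTopologicalAddGroup β t2 _) {f g : α → β}
    (hf : Continuous[t1, t2] f) (hg : Continuous[t1, t2] g) :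
    Continuous[t1, t2] (fun x => f x + g x) := by
  letI := t2; haveI := h
  exact hf.add hg

theorem contSub2 {t1 : TopologicalSpace α} {t2 : TopologicalSpace β} [AddGroup β]
    (h : @IsTopologicalAddGroup β t2 _) {f g : α → β}
    (hf : Continuous[t1, t2] f) (hg : Continuous[t1, t2] g) :
    Continuous[t1, t2] (fun x => f x - g x) := by
  letI := t2; haveI := h
  exact hf.sub hg

theorem contSMul2 {t1 : TopologicalSpace α} {t2 : TopologicalSpace β} [AddCommGroup β]
    [Module ℝ β] (h : @ContinuousSMul ℝ β _ _ t2) {f : α → ℝ} {g : α → β}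
    (hf : Continuous[t1, inferInstance] f) (hg : Continuous[t1, t2] g) :
    Continuous[t1, t2] (fun x => f x • g x) := by
  letI := t2; haveI := h
  exact hf.smul hg

theorem contMulReal {t1 : TopologicalSpace α} {f g : α → ℝ}
    (hf : Continuous[t1, inferInstance] f) (hg : Continuous[t1, inferInstance] g) :
    Continuous[t1, inferInstance] (fun x => f x * g x) := hf.mul hg

theorem contAddReal {t1 : TopologicalSpace α} {f g : α → ℝ}
    (hf : Continuous[t1, inferInstance] f) (hg : Continuous[t1, inferInstance] g) :
    Continuous[t1, inferInstance] (fun x => f x + g x) := hf.add hg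

end ContHelpers

/-- Transfer of the Mackey property along a continuous linear isomorphism. -/
theorem mackey_of_clequiv {E : Type u} {F : Type u} [AddCommGroup E] [Module ℝ E]
    [AddCommGroup F] [Module ℝ F] [tE : TopologicalSpace E] [tF : TopologicalSpace F]
    (e : E ≃L[ℝ] F) (hE : IsMackeySpace E) : IsMackeySpace F := by
  let f₀ : E → F := e
  let g₀ : F → E := e.symm
  have hf₀ : Continuous[tE, tF] f₀ := e.continuous
  have hg₀ : Continuous[tF, tE] g₀ := e.symm.continuous
  have hfg : f₀ ∘ g₀ = id := by funext y; simp [f₀, g₀]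
  have hgf : g₀ ∘ f₀ = id := by funext x; simp [f₀, g₀]
  let eL : E →ₗ[ℝ] F := e.toLinearEquiv.toLinearMap
  let eLs : F →ₗ[ℝ] E := e.symm.toLinearEquiv.toLinearMap
  intro t ht1 ht2 ht3 hdual
  let t' : TopologicalSpace E := t.induced f₀
  have hcontE : Continuous[t', t] f₀ := continuous_induced_dom
  have hcontF : Continuous[t, t'] g₀ := by
    rw [continuous_induced_rng, hfg]; exact continuous_id
  haveI hT1' : @IsTopologicalAddGroup E t' _ :=
    by letI := t; exact topologicalAddGroup_induced eL.toAddMonoidHom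
  haveI hT2' : @ContinuousSMul ℝ E _ _ t' :=
    continuousSMul_induced (t := t) eL
  haveI hT3' : @LocallyConvexSpace ℝ E _ _ _ _ t' :=
    @LocallyConvexSpace.induced ℝ E F _ _ _ _ _ _ t ht3 eL
  have hdual' : ∀ g : E →ₗ[ℝ] ℝ,
      Continuous[t', inferInstance] g ↔ Continuous[tE, inferInstance] g := by
    intro g
    have hcomp : (⇑(g.comp eLs) : F → ℝ) = (g : E → ℝ) ∘ g₀ := rfl
    have h4 : ((g : E → ℝ) ∘ g₀) ∘ f₀ = (g : E → ℝ) := by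
      rw [Function.comp_assoc, hgf]; rfl
    constructor
    · intro h
      have h1 : Continuous[t, inferInstance] (g.comp eLs) := by
        rw [hcomp]; exact contComp h hcontF
      have h2 : Continuous[tF, inferInstance] (g.comp eLs) := (hdual _).mp h1
      rw [hcomp] at h2
      have h3 : Continuous[tE, inferInstance] (((g : E → ℝ) ∘ g₀) ∘ f₀) := contComp h2 hf₀
      rwa [h4] at h3
    · intro h
      have h2 : Continuous[tF, inferInstance] (g.comp eLs) := by
        rw [hcomp]; exact contComp h hg₀
      have h1 : Continuous[t, inferInstance] (g.comp eLs) := (hdual _).mpr h2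
      rw [hcomp] at h1
      have h3 : Continuous[t', inferInstance] (((g : E → ℝ) ∘ g₀) ∘ f₀) := contComp h1 hcontE
      rwa [h4] at h3
  have hle : tE ≤ t' := hE t' hT1' hT2' hT3' hdual'
  have hidE : Continuous[tE, t'] (id : E → E) := continuous_id_iff_le.mpr hle
  have hcmp : Continuous[tF, t] (f₀ ∘ (id : E → E) ∘ g₀) := contComp hcontE (contComp hidE hg₀)
  have hco : f₀ ∘ (id : E → E) ∘ g₀ = id := by
    funext y; exact congrFun hfg y
  rw [hco] at hcmp
  exact continuous_id_iff_le.mp hcmp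

/-- The Mackey property for `ℝ × E` is equivalent to that of `E`. -/
theorem mackey_prod_real_iff {E : Type u} [AddCommGroup E] [Module ℝ E]
    [tE : TopologicalSpace E] [IsTopologicalAddGroup E] [ContinuousSMul ℝ E]
    [LocallyConvexSpace ℝ E] : IsMackeySpace (ℝ × E) ↔ IsMackeySpace E := by
  let τP : TopologicalSpace (ℝ × E) := instTopologicalSpaceProd
  let j : E → ℝ × E := fun y : E => ((0 : ℝ), y)
  have hjτ : Continuous[tE, τP] j := contPair (contConst 0) (@continuous_id E tE)
  constructor
  · -- Mackey (ℝ × E) → Mackey E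
    intro hP t ht1 ht2 ht3 hdual
    let s : TopologicalSpace (ℝ × E) := @instTopologicalSpaceProd ℝ E _ t
    haveI hs1 : @IsTopologicalAddGroup (ℝ × E) s _ := inferInstance
    haveI hs2 : @ContinuousSMul ℝ (ℝ × E) _ _ s := inferInstance
    haveI hs3 : @LocallyConvexSpace ℝ (ℝ × E) _ _ _ _ s := inferInstance
    have hjt : Continuous[t, s] j := contPair (contConst 0) (@continuous_id E t)
    have hsdual : ∀ f : ℝ × E →ₗ[ℝ] ℝ,
        Continuous[s, inferInstance] f ↔ Continuous[τP, inferInstance] f := by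
      intro f
      set a : ℝ := f ((1 : ℝ), (0 : E)) with ha
      set g : E →ₗ[ℝ] ℝ := f.comp (LinearMap.inr ℝ ℝ E) with hgdef
      have hfeq : (f : ℝ × E → ℝ) = fun p : ℝ × E => p.1 * a + g p.2 := by
        funext p
        have hp : p = p.1 • ((1 : ℝ), (0 : E)) + ((0 : ℝ), p.2) := by
          ext <;> simp
        calc f p = f (p.1 • ((1 : ℝ), (0 : E)) + ((0 : ℝ), p.2)) := by rw [← hp]
          _ = p.1 * a + g p.2 := by
              rw [map_add, map_smul, smul_eq_mul]; rfl
      have hgj : (g : E → ℝ) = (f : ℝ × E → ℝ) ∘ j := rfl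
      constructor
      · intro hf
        have hgt : Continuous[t, inferInstance] g := by
          rw [hgj]; exact contComp hf hjt
        have hgτ : Continuous[tE, inferInstance] g := (hdual g).mp hgt
        rw [hfeq]
        exact contAddReal (contMulReal contFst (contConst a)) (contComp' hgτ contSnd)
      · intro hf
        have hgτ : Continuous[tE, inferInstance] g := by
          rw [hgj]; exact contComp hf hjτ
        have hgt : Continuous[t, inferInstance] g := (hdual g).mpr hgτ
        rw [hfeq]
        exact contAddReal (contMulReal contFst (contConst a)) (contComp' hgt contSnd)
    have hle : τP ≤ s := hP s hs1 hs2 hs3 hsdual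
    have h1 : Continuous[τP, s] (id : ℝ × E → ℝ × E) := continuous_id_iff_le.mpr hle
    have h2 : Continuous[s, t] (Prod.snd : ℝ × E → E) := contSnd
    have h3 : Continuous[tE, t]
        ((Prod.snd : ℝ × E → E) ∘ (id : ℝ × E → ℝ × E) ∘ j) := contComp h2 (contComp h1 hjτ)
    have h4 : ((Prod.snd : ℝ × E → E) ∘ (id : ℝ × E → ℝ × E) ∘ j) = (id : E → E) := rfl
    rw [h4] at h3
    exact continuous_id_iff_le.mp h3
  · -- Mackey E → Mackey (ℝ × E)
    intro hE s hs1 hs2 hs3 hsdual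
    let t : TopologicalSpace E := s.induced j
    have hjt : Continuous[t, s] j := continuous_induced_dom
    haveI ht1 : @IsTopologicalAddGroup E t _ :=
      by letI := s; exact topologicalAddGroup_induced (LinearMap.inr ℝ ℝ E).toAddMonoidHom
    haveI ht2 : @ContinuousSMul ℝ E _ _ t :=
      continuousSMul_induced (t := s)
        (LinearMap.inr ℝ ℝ E)
    haveI ht3 : @LocallyConvexSpace ℝ E _ _ _ _ t :=
      @LocallyConvexSpace.induced ℝ E (ℝ × E) _ _ _ _ _ _ s hs3 (LinearMap.inr ℝ ℝ E)
    have hfst : Continuous[s, inferInstance] (LinearMap.fst ℝ ℝ E) :=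
      (hsdual (LinearMap.fst ℝ ℝ E)).mpr (@continuous_fst ℝ E _ tE)
    have hPs : Continuous[s, s] (fun p : ℝ × E => p - p.1 • ((1 : ℝ), (0 : E))) :=
      contSub2 hs1 (@continuous_id (ℝ × E) s)
        (contSMul2 hs2 (show Continuous[s, inferInstance] (fun p : ℝ × E => p.1) from hfst)
          (contConst ((1 : ℝ), (0 : E))))
    have hsnd : Continuous[s, t] (Prod.snd : ℝ × E → E) := by
      rw [continuous_induced_rng]
      have heq : j ∘ (Prod.snd : ℝ × E → E)
          = fun p : ℝ × E => p - p.1 • ((1 : ℝ), (0 : E)) := by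
        funext p
        show ((0 : ℝ), p.2) = p - p.1 • ((1 : ℝ), (0 : E))
        ext <;> simp
      rw [heq]
      exact hPs
    have htdual : ∀ g : E →ₗ[ℝ] ℝ,
        Continuous[t, inferInstance] g ↔ Continuous[tE, inferInstance] g := by
      intro g
      have hgs : (⇑(g.comp (LinearMap.snd ℝ ℝ E)) : ℝ × E → ℝ)
          = (g : E → ℝ) ∘ (Prod.snd : ℝ × E → E) := rfl
      have hgj : (g : E → ℝ) = (⇑(g.comp (LinearMap.snd ℝ ℝ E)) : ℝ × E → ℝ) ∘ j := rfl
      constructor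
      · intro hg
        have h1 : Continuous[s, inferInstance] (g.comp (LinearMap.snd ℝ ℝ E)) := by
          rw [hgs]; exact contComp hg hsnd
        have h2 : Continuous[τP, inferInstance] (g.comp (LinearMap.snd ℝ ℝ E)) :=
          (hsdual _).mp h1
        rw [hgj]
        exact contComp h2 hjτ
      · intro hg
        have h1 : Continuous[τP, inferInstance] (g.comp (LinearMap.snd ℝ ℝ E)) := by
          rw [hgs]; exact contComp hg contSnd
        have h2 : Continuous[s, inferInstance] (g.comp (LinearMap.snd ℝ ℝ E)) :=
          (hsdual _).mpr h1
        rw [hgj]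
        exact contComp h2 hjt
    have hle : tE ≤ t := hE t ht1 ht2 ht3 htdual
    have hj' : Continuous[tE, s] j :=
      contComp hjt (continuous_id_iff_le.mpr hle : Continuous[tE, t] (id : E → E))
    have hid : Continuous[τP, s]
        (fun p : ℝ × E => p.1 • ((1 : ℝ), (0 : E)) + ((0 : ℝ), p.2)) :=
      contAdd2 hs1 (contSMul2 hs2 contFst (contConst ((1 : ℝ), (0 : E))))
        (contComp' hj' contSnd)
    have hid' : Continuous[τP, s] (id : ℝ × E → ℝ × E) := by
      have heq : (id : ℝ × E → ℝ × E)
          = fun p : ℝ × E => p.1 • ((1 : ℝ), (0 : E)) + ((0 : ℝ), p.2) := by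
        funext p; ext <;> simp
      rw [heq]
      exact hid
    exact continuous_id_iff_le.mp hid'

end AuxMackey

/-- for a Tychonoff space `X`, the free locally convex space `L(X)` is
topologically isomorphic to `ℝ ⊕ L_G(X)`; consequently `L(X)` is a Mackey space iff
`L_G(X)` is a Mackey space. -/
theorem stmt19 (X : Type v) [TopologicalSpace X] [T35Space X]
    (L : Type u) [AddCommGroup L] [Module ℝ L] [TopologicalSpace L]
    [IsTopologicalAddGroup L] [ContinuousSMul ℝ L] [LocallyConvexSpace ℝ L]
    (i : X → L) (hL : IsFreeLCS X L i)
    (e : X) (LG : Type u) [AddCommGroup LG] [Module ℝ LG] [TopologicalSpace LG]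
    [IsTopologicalAddGroup LG] [ContinuousSMul ℝ LG] [LocallyConvexSpace ℝ LG]
    (iG : X → LG) (hLG : IsGraevFreeLCS X e LG iG) :
    Nonempty (L ≃L[ℝ] ℝ × LG) ∧ (IsMackeySpace L ↔ IsMackeySpace LG) := by
  obtain ⟨hi, hext⟩ := hL
  obtain ⟨hiG, hiGe, hextG⟩ := hLG
  -- the map `φ : L → ℝ × LG` extending `x ↦ (1, iG x)`
  obtain ⟨φ, hφ, -⟩ := hext (ℝ × LG) (fun x => ((1 : ℝ), iG x)) (continuous_const.prodMk hiG)
  -- the map `h : LG → L` extending `x ↦ i x - i e`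
  obtain ⟨h, hh, -⟩ := hextG L (fun x => i x - i e) (hi.sub continuous_const) (sub_self _)
  -- the inverse `ψ : ℝ × LG → L`
  set ψ : ℝ × LG →L[ℝ] L :=
    (ContinuousLinearMap.fst ℝ ℝ LG).smulRight (i e) + h.comp (ContinuousLinearMap.snd ℝ ℝ LG)
    with hψdef
  have hψ : ∀ p : ℝ × LG, ψ p = p.1 • i e + h p.2 := fun p => rfl
  -- left inverse
  have hleft : ∀ y : L, ψ (φ y) = y := by
    obtain ⟨g, -, hgu⟩ := hext L i hi
    have h1 : ψ.comp φ = g := hgu _ (by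
      intro x
      simp only [ContinuousLinearMap.comp_apply, hφ, hψ, hh, one_smul]
      abel)
    have h2 : ContinuousLinearMap.id ℝ L = g := hgu _ (fun x => rfl)
    intro y
    have := congrArg (fun (k : L →L[ℝ] L) => k y) (h1.trans h2.symm)
    simpa using this
  -- `φ ∘ h = inr`
  have hco : φ.comp h = ContinuousLinearMap.inr ℝ ℝ LG := by
    obtain ⟨g, -, hgu⟩ := hextG (ℝ × LG) (fun x => ((0 : ℝ), iG x))
      (continuous_const.prodMk hiG) (by show ((0 : ℝ), iG e) = (0 : ℝ × LG); rw [hiGe]; rfl)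
    have h1 : φ.comp h = g := hgu _ (by
      intro x
      simp only [ContinuousLinearMap.comp_apply, hh, map_sub, hφ, hiGe]
      ext <;> simp)
    have h2 : ContinuousLinearMap.inr ℝ ℝ LG = g := hgu _ (fun x => rfl)
    exact h1.trans h2.symm
  -- right inverse
  have hright : ∀ p : ℝ × LG, φ (ψ p) = p := by
    intro p
    have hφie : φ (i e) = ((1 : ℝ), (0 : LG)) := by rw [hφ, hiGe]
    have hφh : φ (h p.2) = ((0 : ℝ), p.2) := by
      have := congrArg (fun (k : LG →L[ℝ] ℝ × LG) => k p.2) hco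
      simpa using this
    rw [hψ, map_add, map_smul, hφie, hφh]
    ext <;> simp
  let eqv : L ≃L[ℝ] ℝ × LG := ContinuousLinearEquiv.equivOfInverse φ ψ hleft hright
  refine ⟨⟨eqv⟩, ?_⟩
  have h1 : IsMackeySpace L ↔ IsMackeySpace (ℝ × LG) :=
    ⟨fun hh' => mackey_of_clequiv eqv hh', fun hh' => mackey_of_clequiv eqv.symm hh'⟩
  exact h1.trans mackey_prod_real_iff
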